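/- For every natural number n, the number of relations R : Fin n → Fin n → Prop that are symmetric and satisfy (R x y → R x x for all x, y) equals ∑_{i=0}^{n} C(n, i) · 2^{i(i−1)/2}, where C(n, i) is the binomial coefficient. -/

import Mathlib

open scoped Classical

/-- States with a fixed support `s` correspond to graphs on `s`. -/
noncomputable def fiberEquiv (n : ℕ) (s : Finset (Fin n)) :
    {R : {R : Fin n → Fin n → Prop // Symmetric R ∧ ∀ x y, R x y → R x x} //
        Finset.univ.filter (fun x => R.1 x x) = s} ≃
      ({p : Sym2 {x // x ∈ s} // ¬ p.IsDiag} → Bool) where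
  toFun := fun ⟨⟨R, hsym, _⟩, _⟩ => fun p =>
    Sym2.lift ⟨fun (a b : {x // x ∈ s}) => decide (R a b),
      fun a b => decide_eq_decide.2 ⟨fun h => hsym h, fun h => hsym h⟩⟩ p.1
  invFun := fun g =>
    ⟨⟨fun x y => ∃ hx : x ∈ s, ∃ hy : y ∈ s, ∀ h : x ≠ y,
        g ⟨s(⟨x, hx⟩, ⟨y, hy⟩), by
          rw [Sym2.mk_isDiag_iff]
          exact fun e => h (Subtype.ext_iff.1 e)⟩ = true,
      by
        constructor
        · rintro x y ⟨hx, hy, h⟩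
          refine ⟨hy, hx, fun hne => ?_⟩
          exact (congrArg g (Subtype.ext Sym2.eq_swap)).trans (h hne.symm)
        · rintro x y ⟨hx, _, _⟩
          exact ⟨hx, hx, fun hne => absurd rfl hne⟩⟩,
      by
        ext x
        simp only [Finset.mem_filter, Finset.mem_univ, true_and]
        exact ⟨fun ⟨hx, _, _⟩ => hx, fun hx => ⟨hx, hx, fun h => absurd rfl h⟩⟩⟩
  left_inv := by
    rintro ⟨⟨R, hsym, hpos⟩, hsupp⟩
    refine Subtype.ext (Subtype.ext ?_)
    funext x y
    apply propext
    have hmem : ∀ z : Fin n, z ∈ s ↔ R z z := by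
      intro z
      rw [← hsupp]
      simp
    constructor
    · rintro ⟨hx, hy, h⟩
      by_cases hxy : x = y
      · subst hxy; exact (hmem x).1 hx
      · have := h hxy
        simpa using this
    · intro hR
      refine ⟨(hmem x).2 (hpos x y hR), (hmem y).2 (hpos y x (hsym hR)), fun _ => ?_⟩
      simpa using hR
  right_inv := by
    intro g
    funext p
    obtain ⟨p, hp⟩ := p
    induction p using Sym2.inductionOn with
    | hf a b =>
      obtain ⟨a, ha⟩ := a
      obtain ⟨b, hb⟩ := b
      have hab : a ≠ b := by
        simpa [Sym2.mk_isDiag_iff, Subtype.ext_iff] using hp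
      simp only [Sym2.lift_mk]
      cases hgb : g ⟨s(⟨a, ha⟩, ⟨b, hb⟩), hp⟩ with
      | true =>
        exact @decide_eq_true _ (Classical.propDecidable _) ⟨ha, hb, fun _ => hgb⟩
      | false =>
        refine @decide_eq_false _ (Classical.propDecidable _) ?_
        rintro ⟨hx, hy, h⟩
        exact Bool.noConfusion ((h hab).symm.trans hgb)

/-- The number of states of an `n`-element set in CPM(Rel), i.e. relations on `Fin n`
that are symmetric and satisfy `R x y → R x x`, is `∑ i, C(n, i) * 2 ^ (i (i - 1) / 2)`. -/
theorem card_states (n : ℕ) :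
    Nat.card {R : Fin n → Fin n → Prop // Symmetric R ∧ ∀ x y, R x y → R x x} =
      ∑ i ∈ Finset.range (n + 1), n.choose i * 2 ^ (i * (i - 1) / 2) := by
  classical
  set States := {R : Fin n → Fin n → Prop // Symmetric R ∧ ∀ x y, R x y → R x x}
  have e : States ≃ Σ s : Finset (Fin n),
      {R : States // Finset.univ.filter (fun x => R.1 x x) = s} :=
    (Equiv.sigmaFiberEquiv (fun R : States => Finset.univ.filter (fun x => R.1 x x))).symm
  rw [Nat.card_congr e]
  have hcard : ∀ s : Finset (Fin n),
      Nat.card {R : States // Finset.univ.filter (fun x => R.1 x x) = s} =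
        2 ^ (s.card.choose 2) := by
    intro s
    rw [Nat.card_congr (fiberEquiv n s), Nat.card_fun, Nat.card_eq_fintype_card,
      Nat.card_eq_fintype_card, Sym2.card_subtype_not_diag, Fintype.card_bool,
      Fintype.card_coe]
  haveI : Fintype States := Fintype.ofFinite States
  haveI : ∀ s : Finset (Fin n),
      Fintype {R : States // Finset.univ.filter (fun x => R.1 x x) = s} :=
    fun s => Fintype.ofFinite _
  rw [Nat.card_eq_fintype_card, Fintype.card_sigma]
  have hterm : ∀ s : Finset (Fin n),
      Fintype.card {R : States // Finset.univ.filter (fun x => R.1 x x) = s} =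
        2 ^ (s.card.choose 2) := by
    intro s
    rw [← Nat.card_eq_fintype_card, hcard s]
  rw [Finset.sum_congr rfl (fun s _ => hterm s)]
  have hps := Finset.sum_powerset_apply_card (fun i => 2 ^ (i.choose 2))
    (x := (Finset.univ : Finset (Fin n)))
  rw [Finset.powerset_univ] at hps
  rw [hps]
  simp only [Finset.card_univ, Fintype.card_fin, smul_eq_mul]
  refine Finset.sum_congr rfl fun i _ => ?_
  rw [Nat.choose_two_right]
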